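/- Fix constants t, α, β, δ, ξ, L, η, ε, φ > 0 with ηL < 1, set λ = 1 + ηL and γ(K) = (t − Kβ)/α, and define g(K) = γ(K)·η·φ − (δξK/L·(λ^{γ(K)/K} − 1) − ηξδγ(K)) / ε² on the interval where γ(K) > 0 and g(K) > 0. Then G(K) = 1/g(K) is convex in K on that interval. -/

import Mathlib

open Set

lemma convexOn_mul_exp_div (b : ℝ) :
    ConvexOn ℝ (Ioi (0:ℝ)) (fun x => x * Real.exp (b / x)) := by
  have hint : interior (Ioi (0:ℝ)) = Ioi 0 := interior_Ioi
  refine convexOn_of_hasDerivWithinAt2_nonneg (convex_Ioi 0) ?_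
    (f' := fun x => Real.exp (b / x) * (1 - b / x))
    (f'' := fun x => Real.exp (b / x) * (b ^ 2 / x ^ 3)) ?_ ?_ ?_
  · fun_prop (disch := intro x hx; exact ne_of_gt hx)
  · rw [hint]
    intro x hx
    have hx0 : x ≠ 0 := ne_of_gt hx
    have h1 : HasDerivAt (fun x : ℝ => b / x) (-b / x ^ 2) x := by
      have := (hasDerivAt_const x b).div (hasDerivAt_id' x) hx0
      exact this.congr_deriv (by ring)
    have h2 : HasDerivAt (fun x : ℝ => Real.exp (b / x))
        (Real.exp (b / x) * (-b / x ^ 2)) x := h1.exp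
    have h3 := (hasDerivAt_id x).mul h2
    refine (h3.congr_deriv ?_).hasDerivWithinAt
    field_simp
    simp only [id_eq]
    ring
  · rw [hint]
    intro x hx
    have hx0 : x ≠ 0 := ne_of_gt hx
    have h1 : HasDerivAt (fun x : ℝ => b / x) (-b / x ^ 2) x := by
      have := (hasDerivAt_const x b).div (hasDerivAt_id' x) hx0
      exact this.congr_deriv (by ring)
    have h2 : HasDerivAt (fun x : ℝ => Real.exp (b / x))
        (Real.exp (b / x) * (-b / x ^ 2)) x := h1.exp
    have h4 : HasDerivAt (fun x : ℝ => 1 - b / x) (-(-b / x ^ 2)) x := h1.const_sub 1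
    have h5 := h2.mul h4
    refine (h5.congr_deriv ?_).hasDerivWithinAt
    field_simp
    ring
  · rw [hint]
    intro x hx
    have h := Real.exp_pos (b / x)
    have hx3 : (0:ℝ) < x ^ 3 := pow_pos hx 3
    positivity

lemma convexOn_one_div_of_concaveOn {s : Set ℝ} {g : ℝ → ℝ}
    (hg : ConcaveOn ℝ s g) (hpos : ∀ x ∈ s, 0 < g x) :
    ConvexOn ℝ s (fun x => 1 / g x) := by
  refine ⟨hg.1, ?_⟩
  intro x hx y hy a b ha hb hab
  have hgx := hpos x hx
  have hgy := hpos y hy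
  have hz := hpos _ (hg.1 hx hy ha hb hab)
  have hcc := hg.2 hx hy ha hb hab
  simp only [smul_eq_mul] at *
  have hpos2 : 0 < a * g x + b * g y := by
    rcases ha.lt_or_eq with ha' | ha'
    · nlinarith [mul_pos ha' hgx, mul_nonneg hb hgy.le]
    · rw [← ha'] at hab ⊢; simp at hab; rw [hab]; simpa using hgy
  have h1 : 1 / g (a * x + b * y) ≤ 1 / (a * g x + b * g y) :=
    one_div_le_one_div_of_le hpos2 hcc
  refine h1.trans ?_
  rw [mul_one_div, mul_one_div, div_add_div _ _ (ne_of_gt hgx) (ne_of_gt hgy),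
    div_le_div_iff₀ hpos2 (by positivity)]
  have hb1 : b = 1 - a := by linarith
  have key : (a * g y + g x * b) * (a * g x + b * g y) - g x * g y
      = a * b * (g x - g y) ^ 2 := by rw [hb1]; ring
  nlinarith [mul_nonneg (mul_nonneg ha hb) (sq_nonneg (g x - g y))]

/-- Theorem 2: with `λ = 1 + ηL`, `γ(K) = (t − Kβ)/α` and
`g(K) = γ(K)ηφ − (δξK/L·(λ^{γ(K)/K} − 1) − ηξδγ(K))/ε²`, the upper bound
`G(K) = 1/g(K)` is convex in `K` on any convex subset of the region where
`K > 0`, `γ(K) > 0` and `g(K) > 0`. -/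
theorem stmt_11 (t α β δ ξ L η ε φ : ℝ)
    (ht : 0 < t) (hα : 0 < α) (hβ : 0 < β) (hδ : 0 < δ) (hξ : 0 < ξ)
    (hL : 0 < L) (hη : 0 < η) (hε : 0 < ε) (hφ : 0 < φ) (hηL : η * L < 1) :
    ∀ s : Set ℝ, Convex ℝ s →
      (∀ K ∈ s, 0 < K ∧ 0 < (t - K * β) / α ∧
        0 < ((t - K * β) / α) * η * φ -
          (δ * ξ * K / L * ((1 + η * L) ^ (((t - K * β) / α) / K) - 1) -
            η * ξ * δ * ((t - K * β) / α)) / ε ^ 2) →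
      ConvexOn ℝ s (fun K =>
        1 / (((t - K * β) / α) * η * φ -
          (δ * ξ * K / L * ((1 + η * L) ^ (((t - K * β) / α) / K) - 1) -
            η * ξ * δ * ((t - K * β) / α)) / ε ^ 2)) := by
  intro s hconv hmem
  set lg := Real.log (1 + η * L) with hlg
  have hlam : (1:ℝ) < 1 + η * L := by nlinarith
  have hlam0 : (0:ℝ) < 1 + η * L := by linarith
  have hlgpos : 0 < lg := Real.log_pos hlam
  set b := t / α * lg with hbdef
  set c := Real.exp (-(β / α) * lg) with hcdef
  have hcpos : 0 < c := Real.exp_pos _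
  set R := δ * ξ * c / (L * ε ^ 2) with hRdef
  have hRpos : 0 < R := by positivity
  set A := t / α * (η * φ + η * ξ * δ / ε ^ 2) with hAdef
  set B := δ * ξ / (L * ε ^ 2) - β / α * (η * φ + η * ξ * δ / ε ^ 2) with hBdef
  -- the nice form
  have hsub : s ⊆ Ioi (0:ℝ) := fun K hK => (hmem K hK).1
  have hfconv : ConvexOn ℝ s (fun K => K * Real.exp (b / K)) :=
    (convexOn_mul_exp_div b).subset hsub hconv
  have haff : ConcaveOn ℝ s (fun K => A + B * K) := by
    refine ⟨hconv, ?_⟩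
    intro x _ y _ a b' ha hb' hab
    simp only [smul_eq_mul]
    apply le_of_eq
    linear_combination A * hab
  have hsm : ConcaveOn ℝ s (fun K => -(R * (K * Real.exp (b / K)))) := by
    have h := (hfconv.smul hRpos.le).neg
    simpa only [Pi.neg_def, Pi.smul_def, smul_eq_mul] using h
  have hnice : ConcaveOn ℝ s (fun K => A + B * K + -(R * (K * Real.exp (b / K)))) :=
    haff.add hsm
  have heq : EqOn (fun K => A + B * K + -(R * (K * Real.exp (b / K))))
      (fun K => ((t - K * β) / α) * η * φ -
        (δ * ξ * K / L * ((1 + η * L) ^ (((t - K * β) / α) / K) - 1) -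
          η * ξ * δ * ((t - K * β) / α)) / ε ^ 2) s := by
    intro K hK
    obtain ⟨hK0, hγ, -⟩ := hmem K hK
    have hrw : (1 + η * L) ^ (((t - K * β) / α) / K) = Real.exp (b / K) * c := by
      rw [Real.rpow_def_of_pos hlam0, ← hlg, hcdef, ← Real.exp_add]
      congr 1
      rw [hbdef]
      field_simp
      ring
    simp only [hrw]
    rw [hAdef, hBdef, hRdef]
    field_simp
    ring
  have hg : ConcaveOn ℝ s (fun K =>
      ((t - K * β) / α) * η * φ -
        (δ * ξ * K / L * ((1 + η * L) ^ (((t - K * β) / α) / K) - 1) -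
          η * ξ * δ * ((t - K * β) / α)) / ε ^ 2) := hnice.congr heq
  exact convexOn_one_div_of_concaveOn hg (fun K hK => (hmem K hK).2.2)
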